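/- arXiv:2401.03126 — 4 statements merged into one kernel-verified Lean document; each statement's English description precedes it below -/
import Mathlib

section
/- Two matrices X, Y ∈ Π^m S^{k-1} have conjugate stabilizers in O(k) (i.e., there is Q ∈ O(k) with Stab(Y) = Q Stab(X) Q⁻¹) if and only if rank(X) = rank(Y). -/
open Matrix Real Filter

/-- Rows of `X` are ℓ2-normalized. -/
def RowsNormalized {m k : ℕ} (X : Matrix (Fin m) (Fin k) ℝ) : Prop :=
  ∀ i, ∑ j, X i j ^ 2 = 1

/-- `O` is an orthogonal matrix. -/
def IsOrth {k : ℕ} (O : Matrix (Fin k) (Fin k) ℝ) : Prop :=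
  Oᵀ * O = 1

/-- Spherical product distance on `Π^m S^{k-1}`. -/
noncomputable def dPS {m k : ℕ} (X Y : Matrix (Fin m) (Fin k) ℝ) : ℝ :=
  Real.sqrt (∑ i, (Real.arccos (∑ j, X i j * Y i j)) ^ 2)

/-- Quotient (orbit space) distance on `Π^m S^{k-1} / O(k)`. -/
noncomputable def dOrb {m k : ℕ} (X Y : Matrix (Fin m) (Fin k) ℝ) : ℝ :=
  sInf {d : ℝ | ∃ O : Matrix (Fin k) (Fin k) ℝ, IsOrth O ∧ d = dPS X (Y * O)}

/-- The stabilizer of X in O(k) under right multiplication. -/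
def Stab {m k : ℕ} (X : Matrix (Fin m) (Fin k) ℝ) : Set (Matrix (Fin k) (Fin k) ℝ) :=
  {O | IsOrth O ∧ X * O = X}

section Auxiliary

open Module Submodule

variable {m k : ℕ}

/-- The row space of a matrix. -/
def rowSpace (X : Matrix (Fin m) (Fin k) ℝ) : Submodule ℝ (Fin k → ℝ) :=
  LinearMap.range Xᵀ.mulVecLin

lemma rank_eq_finrank_rowSpace (X : Matrix (Fin m) (Fin k) ℝ) :
    X.rank = finrank ℝ (rowSpace X) := by
  rw [← Matrix.rank_transpose]; rfl

lemma row_mem_rowSpace (X : Matrix (Fin m) (Fin k) ℝ) (i : Fin m) : X i ∈ rowSpace X := by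
  refine ⟨Pi.single i 1, ?_⟩
  ext j
  simp [Matrix.mulVec, dotProduct, Pi.single_apply]

lemma IsOrth.mul_self_transpose {O : Matrix (Fin k) (Fin k) ℝ} (h : IsOrth O) : O * Oᵀ = 1 :=
  mul_eq_one_comm.mp h

lemma IsOrth.transpose {O : Matrix (Fin k) (Fin k) ℝ} (h : IsOrth O) : IsOrth Oᵀ := by
  unfold IsOrth at *
  rw [Matrix.transpose_transpose]
  exact mul_eq_one_comm.mp h

lemma IsOrth.mul {O P : Matrix (Fin k) (Fin k) ℝ} (h1 : IsOrth O) (h2 : IsOrth P) :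
    IsOrth (O * P) := by
  unfold IsOrth at *
  rw [Matrix.transpose_mul]
  calc Pᵀ * Oᵀ * (O * P) = Pᵀ * (Oᵀ * O) * P := by noncomm_ring
    _ = 1 := by rw [h1]; simp [h2]

lemma mem_stab_iff {X : Matrix (Fin m) (Fin k) ℝ} {O : Matrix (Fin k) (Fin k) ℝ} :
    O ∈ Stab X ↔ IsOrth O ∧ ∀ v ∈ rowSpace X, Oᵀ *ᵥ v = v := by
  constructor
  · rintro ⟨h1, h2⟩
    refine ⟨h1, ?_⟩
    rintro v ⟨c, rfl⟩
    show Oᵀ *ᵥ (Xᵀ *ᵥ c) = _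
    rw [Matrix.mulVec_mulVec, ← Matrix.transpose_mul, h2]
    rfl
  · rintro ⟨h1, h2⟩
    refine ⟨h1, ?_⟩
    ext i j
    have h := h2 (X i) (row_mem_rowSpace X i)
    have := congrFun h j
    simp only [Matrix.mulVec, dotProduct, Matrix.transpose_apply] at this
    simp only [Matrix.mul_apply]
    rw [← this]
    exact Finset.sum_congr rfl fun l _ => mul_comm _ _

/-- The matrix of a linear isometry equivalence of Euclidean space. -/
noncomputable def matOf (u : EuclideanSpace ℝ (Fin k) ≃ₗᵢ[ℝ] EuclideanSpace ℝ (Fin k)) :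
    Matrix (Fin k) (Fin k) ℝ :=
  LinearMap.toMatrix' ((WithLp.linearEquiv 2 ℝ (Fin k → ℝ)).toLinearMap ∘ₗ
    (u.toLinearEquiv.toLinearMap ∘ₗ (WithLp.linearEquiv 2 ℝ (Fin k → ℝ)).symm.toLinearMap))

lemma matOf_mulVec (u : EuclideanSpace ℝ (Fin k) ≃ₗᵢ[ℝ] EuclideanSpace ℝ (Fin k))
    (v : Fin k → ℝ) :
    matOf u *ᵥ v = (WithLp.equiv 2 (Fin k → ℝ)) (u ((WithLp.equiv 2 (Fin k → ℝ)).symm v)) := by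
  have : matOf u *ᵥ v = Matrix.toLin' (matOf u) v := rfl
  rw [this, matOf, Matrix.toLin'_toMatrix']
  rfl

lemma matOf_apply (u : EuclideanSpace ℝ (Fin k) ≃ₗᵢ[ℝ] EuclideanSpace ℝ (Fin k)) (i j : Fin k) :
    matOf u i j
      = (WithLp.equiv 2 (Fin k → ℝ)) (u ((WithLp.equiv 2 (Fin k → ℝ)).symm (Pi.single j 1))) i := by
  rw [matOf, LinearMap.toMatrix'_apply]
  have h : (fun j' => if j' = j then (1:ℝ) else 0) = Pi.single j 1 := by
    ext j'; simp [Pi.single_apply]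
  rfl

lemma inner_euclid (x y : EuclideanSpace ℝ (Fin k)) :
    (inner ℝ x y : ℝ)
      = ∑ i, (WithLp.equiv 2 (Fin k → ℝ)) x i * (WithLp.equiv 2 (Fin k → ℝ)) y i := by
  simp [PiLp.inner_apply, RCLike.inner_apply, starRingEnd_apply, mul_comm]

lemma isOrth_matOf (u : EuclideanSpace ℝ (Fin k) ≃ₗᵢ[ℝ] EuclideanSpace ℝ (Fin k)) :
    IsOrth (matOf u) := by
  unfold IsOrth
  ext i j
  simp only [Matrix.mul_apply, Matrix.transpose_apply, matOf_apply]
  have := inner_euclid (u ((WithLp.equiv 2 (Fin k → ℝ)).symm (Pi.single i 1)))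
    (u ((WithLp.equiv 2 (Fin k → ℝ)).symm (Pi.single j 1)))
  rw [u.inner_map_map] at this
  rw [← this, inner_euclid]
  have hsingle : ∀ (a : Fin k),
      (WithLp.equiv 2 (Fin k → ℝ)) ((WithLp.equiv 2 (Fin k → ℝ)).symm (Pi.single a 1))
        = Pi.single a 1 := fun a => rfl
  rw [hsingle, hsingle]
  simp [Pi.single_apply, Matrix.one_apply, eq_comm]

lemma comp_single (x : EuclideanSpace ℝ (Fin k)) (i : Fin k) :
    (WithLp.equiv 2 (Fin k → ℝ)) x i
      = inner ℝ x ((WithLp.equiv 2 (Fin k → ℝ)).symm (Pi.single i 1)) := by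
  rw [inner_euclid]
  have h : (WithLp.equiv 2 (Fin k → ℝ)) ((WithLp.equiv 2 (Fin k → ℝ)).symm (Pi.single i 1))
      = Pi.single i 1 := rfl
  rw [h]
  simp [Pi.single_apply]

lemma exists_reflection (V : Submodule ℝ (Fin k → ℝ)) :
    ∃ σ : Matrix (Fin k) (Fin k) ℝ, IsOrth σ ∧ ∀ v, (σᵀ *ᵥ v = v ↔ v ∈ V) := by
  set V' : Submodule ℝ (EuclideanSpace ℝ (Fin k)) :=
    V.comap (WithLp.linearEquiv 2 ℝ (Fin k → ℝ)).toLinearMap with hV'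
  set R : EuclideanSpace ℝ (Fin k) ≃ₗᵢ[ℝ] EuclideanSpace ℝ (Fin k) := reflection V' with hR
  have hadj : ∀ x y : EuclideanSpace ℝ (Fin k), (inner ℝ (R x) y : ℝ) = inner ℝ x (R y) := by
    intro x y
    conv_lhs => rw [← reflection_involutive V' y]
    exact R.inner_map_map x (R y)
  have hsym : (matOf R)ᵀ = matOf R := by
    ext i j
    rw [Matrix.transpose_apply, matOf_apply, matOf_apply, comp_single, comp_single, hadj,
      real_inner_comm]
  refine ⟨matOf R, isOrth_matOf R, ?_⟩
  intro v
  rw [hsym, matOf_mulVec]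
  rw [Equiv.apply_eq_iff_eq_symm_apply]
  rw [show ((WithLp.equiv 2 (Fin k → ℝ)).symm v : EuclideanSpace ℝ (Fin k))
      = (WithLp.linearEquiv 2 ℝ (Fin k → ℝ)).symm v from rfl]
  rw [hR, reflection_eq_self_iff, hV', Submodule.mem_comap]
  rw [show (WithLp.linearEquiv 2 ℝ (Fin k → ℝ)).toLinearMap
        ((WithLp.linearEquiv 2 ℝ (Fin k → ℝ)).symm v) = v from
    (WithLp.linearEquiv 2 ℝ (Fin k → ℝ)).apply_symm_apply v]

lemma exists_adapted_basis (V : Submodule ℝ (EuclideanSpace ℝ (Fin k))) :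
    ∃ b : OrthonormalBasis (Fin k) ℝ (EuclideanSpace ℝ (Fin k)),
      span ℝ (⇑b '' {i : Fin k | (i : ℕ) < finrank ℝ V}) = V := by
  set r := finrank ℝ V with hr
  have hrk : r ≤ k := by
    have h1 := Submodule.finrank_le V
    simpa using h1
  set bV := stdOrthonormalBasis ℝ V with hbV
  set w : Fin k → EuclideanSpace ℝ (Fin k) :=
    fun i => if h : (i : ℕ) < r then (bV ⟨i, h⟩ : EuclideanSpace ℝ (Fin k)) else 0 with hw
  set s : Set (Fin k) := {i | (i : ℕ) < r} with hs
  have hws : ∀ i (hi : i ∈ s), w i = (bV ⟨i, hi⟩ : EuclideanSpace ℝ (Fin k)) := by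
    intro i hi
    exact dif_pos hi
  have horth : Orthonormal ℝ (s.restrict w) := by
    constructor
    · rintro ⟨i, hi⟩
      rw [show s.restrict w ⟨i, hi⟩ = w i from rfl, hws i hi]
      exact bV.orthonormal.1 _
    · rintro ⟨i, hi⟩ ⟨j, hj⟩ hne
      rw [show s.restrict w ⟨i, hi⟩ = w i from rfl, show s.restrict w ⟨j, hj⟩ = w j from rfl, hws i hi, hws j hj,
        ← Submodule.coe_inner]
      apply bV.orthonormal.2
      intro hcontra
      apply hne
      have : i = j := by
        have := congrArg (Fin.val) hcontra
        exact Fin.ext this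
      exact Subtype.ext this
  have card : finrank ℝ (EuclideanSpace ℝ (Fin k)) = Fintype.card (Fin k) := by simp
  obtain ⟨b, hb⟩ := horth.exists_orthonormalBasis_extension_of_card_eq card
  refine ⟨b, ?_⟩
  have himg : ⇑b '' s = w '' s := Set.image_congr hb
  rw [himg]
  have hcards : Fintype.card s = r := by
    have e : s ≃ Fin r :=
      { toFun := fun x => ⟨(x.1 : ℕ), x.2⟩
        invFun := fun j => ⟨⟨(j : ℕ), lt_of_lt_of_le j.2 hrk⟩, j.2⟩
        left_inv := fun x => by ext; rfl
        right_inv := fun j => by ext; rfl }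
    rw [Fintype.card_congr e, Fintype.card_fin]
  apply Submodule.eq_of_le_of_finrank_le
  · rw [Submodule.span_le]
    rintro x ⟨i, hi, rfl⟩
    rw [hws i hi]
    exact (bV ⟨i, hi⟩).2
  · have h1 : finrank ℝ ↥(span ℝ (Set.range (s.restrict w))) = Fintype.card s :=
      finrank_span_eq_card horth.linearIndependent
    rw [Set.image_eq_range]
    have h2 : (Set.range fun (x : ↥s) => w ↑x) = Set.range (s.restrict w) := rfl
    rw [h2, h1, hcards]

lemma exists_isometry_map (V W : Submodule ℝ (EuclideanSpace ℝ (Fin k)))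
    (h : finrank ℝ V = finrank ℝ W) :
    ∃ u : EuclideanSpace ℝ (Fin k) ≃ₗᵢ[ℝ] EuclideanSpace ℝ (Fin k),
      ∀ x, u x ∈ V ↔ x ∈ W := by
  obtain ⟨bV, hbV⟩ := exists_adapted_basis V
  obtain ⟨bW, hbW⟩ := exists_adapted_basis W
  rw [h] at hbV
  set s : Set (Fin k) := {i : Fin k | (i : ℕ) < finrank ℝ W} with hs
  set u : EuclideanSpace ℝ (Fin k) ≃ₗᵢ[ℝ] EuclideanSpace ℝ (Fin k) :=
    bW.repr.trans bV.repr.symm with hu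
  have hub : ∀ i : Fin k, u (bW i) = bV i := by
    intro i
    rw [hu, LinearIsometryEquiv.trans_apply, OrthonormalBasis.repr_self,
      OrthonormalBasis.repr_symm_single]
  have hmap : Submodule.map (u.toLinearEquiv : EuclideanSpace ℝ (Fin k) →ₗ[ℝ]
      EuclideanSpace ℝ (Fin k)) W = V := by
    rw [← hbW, Submodule.map_span, ← Set.image_comp]
    have himg : (⇑(u.toLinearEquiv : EuclideanSpace ℝ (Fin k) →ₗ[ℝ]
        EuclideanSpace ℝ (Fin k)) ∘ ⇑bW) '' s = ⇑bV '' s :=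
      Set.image_congr fun i _ => by exact hub i
    rw [himg]
    exact hbV
  refine ⟨u, fun x => ?_⟩
  constructor
  · intro hx
    rw [← hmap] at hx
    obtain ⟨y, hy, hyx⟩ := hx
    have : y = x := u.injective hyx
    rwa [← this]
  · intro hx
    rw [← hmap]
    exact ⟨x, hx, rfl⟩

lemma exists_orth_matrix (V W : Submodule ℝ (Fin k → ℝ)) (h : finrank ℝ V = finrank ℝ W) :
    ∃ Q : Matrix (Fin k) (Fin k) ℝ, IsOrth Q ∧ ∀ v, (Qᵀ *ᵥ v ∈ V ↔ v ∈ W) := by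
  set eL := WithLp.linearEquiv 2 ℝ (Fin k → ℝ) with heL
  set V' : Submodule ℝ (EuclideanSpace ℝ (Fin k)) := V.comap eL.toLinearMap with hV'
  set W' : Submodule ℝ (EuclideanSpace ℝ (Fin k)) := W.comap eL.toLinearMap with hW'
  have hfr : finrank ℝ V' = finrank ℝ W' := by
    rw [hV', hW', Submodule.comap_equiv_eq_map_symm, Submodule.comap_equiv_eq_map_symm,
      LinearEquiv.finrank_map_eq, LinearEquiv.finrank_map_eq]
    exact h
  obtain ⟨u, hu⟩ := exists_isometry_map V' W' hfr
  refine ⟨(matOf u)ᵀ, (isOrth_matOf u).transpose, fun v => ?_⟩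
  rw [Matrix.transpose_transpose, matOf_mulVec]
  have h1 : (WithLp.equiv 2 (Fin k → ℝ)) (u ((WithLp.equiv 2 (Fin k → ℝ)).symm v)) ∈ V
      ↔ u ((WithLp.equiv 2 (Fin k → ℝ)).symm v) ∈ V' := Iff.rfl
  have h2 : ((WithLp.equiv 2 (Fin k → ℝ)).symm v : EuclideanSpace ℝ (Fin k)) ∈ W' ↔ v ∈ W :=
    Iff.rfl
  rw [h1, hu, h2]

end Auxiliary

open Module

/-- Two matrices have conjugate stabilizers iff they have the same rank. -/
theorem conjugate_stabilizers_iff_rank_eq {m k : ℕ} (X Y : Matrix (Fin m) (Fin k) ℝ)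
    (hX : RowsNormalized X) (hY : RowsNormalized Y) :
    (∃ Q : Matrix (Fin k) (Fin k) ℝ, IsOrth Q ∧
        Stab Y = (fun P => Q * P * Qᵀ) '' Stab X) ↔ X.rank = Y.rank := by
  constructor
  · rintro ⟨Q, hQ, hset⟩
    have hQQt : Q * Qᵀ = 1 := hQ.mul_self_transpose
    have hQtQ : Qᵀ * Q = 1 := hQ
    obtain ⟨σX, hσXo, hσX⟩ := exists_reflection (rowSpace X)
    obtain ⟨σY, hσYo, hσY⟩ := exists_reflection (rowSpace Y)
    have hσXmem : σX ∈ Stab X := mem_stab_iff.mpr ⟨hσXo, fun v hv => (hσX v).mpr hv⟩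
    have hσYmem : σY ∈ Stab Y := mem_stab_iff.mpr ⟨hσYo, fun v hv => (hσY v).mpr hv⟩
    have key : rowSpace Y = (rowSpace X).comap Qᵀ.mulVecLin := by
      ext v
      rw [Submodule.mem_comap, Matrix.mulVecLin_apply]
      constructor
      · intro hv
        have h1 : Q * σX * Qᵀ ∈ Stab Y := by
          rw [hset]; exact ⟨σX, hσXmem, rfl⟩
        have h2 := (mem_stab_iff.mp h1).2 v hv
        rw [Matrix.transpose_mul, Matrix.transpose_mul, Matrix.transpose_transpose] at h2
        -- h2 : Qᵀᵀ?  (Q * σX * Qᵀ)ᵀ = Q * (σXᵀ * Qᵀ)  -- check shape below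
        have h3 : σXᵀ *ᵥ (Qᵀ *ᵥ v) = Qᵀ *ᵥ v := by
          have hmm : Qᵀ * (Q * (σXᵀ * Qᵀ)) = σXᵀ * Qᵀ := by
            rw [← Matrix.mul_assoc, hQtQ, Matrix.one_mul]
          calc σXᵀ *ᵥ (Qᵀ *ᵥ v) = (σXᵀ * Qᵀ) *ᵥ v := by rw [Matrix.mulVec_mulVec]
            _ = (Qᵀ * (Q * (σXᵀ * Qᵀ))) *ᵥ v := by rw [hmm]
            _ = Qᵀ *ᵥ ((Q * (σXᵀ * Qᵀ)) *ᵥ v) := by rw [Matrix.mulVec_mulVec]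
            _ = Qᵀ *ᵥ v := by rw [h2]

        exact (hσX _).mp h3
      · intro hv
        obtain ⟨P, hPmem, hPeq⟩ : ∃ P ∈ Stab X, Q * P * Qᵀ = σY := by
          have := hσYmem
          rw [hset] at this
          exact this
        have hfixP : Pᵀ *ᵥ (Qᵀ *ᵥ v) = Qᵀ *ᵥ v := (mem_stab_iff.mp hPmem).2 _ hv
        have h4 : σYᵀ *ᵥ v = v := by
          rw [← hPeq]
          calc (Q * P * Qᵀ)ᵀ *ᵥ v = (Q * (Pᵀ * Qᵀ)) *ᵥ v := by
                simp only [Matrix.transpose_mul, Matrix.transpose_transpose]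
            _ = Q *ᵥ (Pᵀ *ᵥ (Qᵀ *ᵥ v)) := by
                simp only [Matrix.mulVec_mulVec, Matrix.mul_assoc]
            _ = Q *ᵥ (Qᵀ *ᵥ v) := by rw [hfixP]
            _ = v := by rw [Matrix.mulVec_mulVec, hQQt, Matrix.one_mulVec]
        exact (hσY v).mp h4
    have hmapeq : (rowSpace X).comap Qᵀ.mulVecLin = (rowSpace X).map Q.mulVecLin := by
      ext w
      rw [Submodule.mem_comap, Submodule.mem_map, Matrix.mulVecLin_apply]
      constructor
      · intro hw
        refine ⟨Qᵀ *ᵥ w, hw, ?_⟩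
        rw [Matrix.mulVecLin_apply, Matrix.mulVec_mulVec, hQQt, Matrix.one_mulVec]
      · rintro ⟨x, hx, rfl⟩
        rw [Matrix.mulVecLin_apply, Matrix.mulVec_mulVec, hQtQ, Matrix.one_mulVec]
        exact hx
    have hfr : finrank ℝ (rowSpace Y) = finrank ℝ (rowSpace X) := by
      rw [key, hmapeq]
      set eQ : (Fin k → ℝ) ≃ₗ[ℝ] (Fin k → ℝ) :=
        LinearEquiv.ofLinear Q.mulVecLin Qᵀ.mulVecLin
          (by rw [← Matrix.mulVecLin_mul, hQQt, Matrix.mulVecLin_one])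
          (by rw [← Matrix.mulVecLin_mul, hQtQ, Matrix.mulVecLin_one]) with heQ
      have hcoe : (eQ : (Fin k → ℝ) →ₗ[ℝ] (Fin k → ℝ)) = Q.mulVecLin := rfl
      rw [← hcoe]
      exact LinearEquiv.finrank_map_eq eQ (rowSpace X)
    rw [rank_eq_finrank_rowSpace, rank_eq_finrank_rowSpace, hfr]
  · intro hrank
    have hfr : finrank ℝ (rowSpace X) = finrank ℝ (rowSpace Y) := by
      rw [← rank_eq_finrank_rowSpace, ← rank_eq_finrank_rowSpace]
      exact hrank
    obtain ⟨Q, hQ, hQmem⟩ := exists_orth_matrix (rowSpace X) (rowSpace Y) hfr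
    have hQQt : Q * Qᵀ = 1 := hQ.mul_self_transpose
    have hQtQ : Qᵀ * Q = 1 := hQ
    refine ⟨Q, hQ, ?_⟩
    ext O'
    simp only [Set.mem_image]
    constructor
    · intro hO'
      refine ⟨Qᵀ * O' * Q, ?_, ?_⟩
      · rw [mem_stab_iff]
        refine ⟨(hQ.transpose.mul (mem_stab_iff.mp hO').1).mul hQ, ?_⟩
        intro w hw
        have hQw : Q *ᵥ w ∈ rowSpace Y := by
          apply (hQmem (Q *ᵥ w)).mp
          rw [Matrix.mulVec_mulVec, hQtQ, Matrix.one_mulVec]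
          exact hw
        have hfix : O'ᵀ *ᵥ (Q *ᵥ w) = Q *ᵥ w := (mem_stab_iff.mp hO').2 _ hQw
        calc (Qᵀ * O' * Q)ᵀ *ᵥ w = (Qᵀ * (O'ᵀ * Q)) *ᵥ w := by
              simp only [Matrix.transpose_mul, Matrix.transpose_transpose]
          _ = Qᵀ *ᵥ (O'ᵀ *ᵥ (Q *ᵥ w)) := by
              simp only [Matrix.mulVec_mulVec, Matrix.mul_assoc]
          _ = Qᵀ *ᵥ (Q *ᵥ w) := by rw [hfix]
          _ = w := by rw [Matrix.mulVec_mulVec, hQtQ, Matrix.one_mulVec]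
      · show Q * (Qᵀ * O' * Q) * Qᵀ = O'
        calc Q * (Qᵀ * O' * Q) * Qᵀ = (Q * Qᵀ) * O' * (Q * Qᵀ) := by noncomm_ring
          _ = O' := by rw [hQQt, Matrix.one_mul, Matrix.mul_one]
    · rintro ⟨P, hP, rfl⟩
      rw [mem_stab_iff]
      refine ⟨(hQ.mul (mem_stab_iff.mp hP).1).mul hQ.transpose, ?_⟩
      intro v hv
      have hQv : Qᵀ *ᵥ v ∈ rowSpace X := (hQmem v).mpr hv
      have hfix : Pᵀ *ᵥ (Qᵀ *ᵥ v) = Qᵀ *ᵥ v := (mem_stab_iff.mp hP).2 _ hQv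
      calc (Q * P * Qᵀ)ᵀ *ᵥ v = (Q * (Pᵀ * Qᵀ)) *ᵥ v := by
            simp only [Matrix.transpose_mul, Matrix.transpose_transpose]
        _ = Q *ᵥ (Pᵀ *ᵥ (Qᵀ *ᵥ v)) := by
            simp only [Matrix.mulVec_mulVec, Matrix.mul_assoc]
        _ = Q *ᵥ (Qᵀ *ᵥ v) := by rw [hfix]
        _ = v := by rw [Matrix.mulVec_mulVec, hQQt, Matrix.one_mulVec]
end

section
/- There exist m, k₁ and correlation matrices Z₁, Z₂ ∈ Corr(m,[k₁]) such that d^{orb,k₁+1}(Z₁, Z₂) < d^{orb,k₁}(Z₁, Z₂); hence the quotient distances d^{orb,k} for different k are genuinely different even on a common domain. -/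
open Matrix Real Filter

/-- Pad an m×k₁ matrix with zero columns to an m×k₂ matrix. -/
def pad {m k₁ k₂ : ℕ} (h : k₁ ≤ k₂) (X : Matrix (Fin m) (Fin k₁) ℝ) :
    Matrix (Fin m) (Fin k₂) ℝ :=
  fun i j => if h' : (j : ℕ) < k₁ then X i ⟨j, h'⟩ else 0

/-- The quotient distances for different k are genuinely different on a common domain. -/
theorem dOrb_depends_on_k :
    ∃ (m k₁ : ℕ) (X Y : Matrix (Fin m) (Fin k₁) ℝ),
      RowsNormalized X ∧ RowsNormalized Y ∧
      dOrb (pad (Nat.le_succ k₁) X) (pad (Nat.le_succ k₁) Y) < dOrb X Y := by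
  refine ⟨2, 1, (fun i _ => if i = 0 then -1 else 1), (fun _ _ => 1), ?_, ?_, ?_⟩
  · intro i
    simp only [Fin.sum_univ_one]
    split <;> norm_num
  · intro i; simp
  · set X : Matrix (Fin 2) (Fin 1) ℝ := (fun i _ => if i = 0 then -1 else 1) with hX
    set Y : Matrix (Fin 2) (Fin 1) ℝ := (fun _ _ => 1) with hYdef
    -- the swap matrix
    set O₂ : Matrix (Fin 2) (Fin 2) ℝ := (fun i j => if i = j then 0 else 1) with hO2
    have hO2orth : IsOrth O₂ := by
      unfold IsOrth
      ext i j
      fin_cases i <;> fin_cases j <;>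
        (simp only [Matrix.mul_apply, Matrix.transpose_apply]; simp [hO2, Matrix.mul_apply, Fin.sum_univ_two, Matrix.one_apply])
    have hval2 : dPS (pad (Nat.le_succ 1) X) ((pad (Nat.le_succ 1) Y) * O₂)
        = Real.sqrt (π ^ 2 / 2) := by
      unfold dPS
      congr 1
      rw [Fin.sum_univ_two]
      have h00 : (∑ j, pad (Nat.le_succ 1) X 0 j * ((pad (Nat.le_succ 1) Y) * O₂) 0 j) = 0 := by
        simp only [Matrix.mul_apply]; simp [pad, Matrix.mul_apply, Fin.sum_univ_two, hX, hYdef, hO2]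
      have h11 : (∑ j, pad (Nat.le_succ 1) X 1 j * ((pad (Nat.le_succ 1) Y) * O₂) 1 j) = 0 := by
        simp only [Matrix.mul_apply]; simp [pad, Matrix.mul_apply, Fin.sum_univ_two, hX, hYdef, hO2]
      rw [h00, h11, Real.arccos_zero]
      ring
    have hbdd : BddBelow {d : ℝ | ∃ O : Matrix (Fin 2) (Fin 2) ℝ,
        IsOrth O ∧ d = dPS (pad (Nat.le_succ 1) X) ((pad (Nat.le_succ 1) Y) * O)} := by
      refine ⟨0, ?_⟩
      rintro d ⟨O, -, rfl⟩
      exact Real.sqrt_nonneg _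
    have hle : dOrb (pad (Nat.le_succ 1) X) (pad (Nat.le_succ 1) Y) ≤ Real.sqrt (π ^ 2 / 2) := by
      unfold dOrb
      exact csInf_le hbdd ⟨O₂, hO2orth, hval2.symm⟩
    have hYeq : dOrb X Y = π := by
      unfold dOrb
      have hmem : π ∈ {d : ℝ | ∃ O : Matrix (Fin 1) (Fin 1) ℝ,
          IsOrth O ∧ d = dPS X (Y * O)} := by
        refine ⟨(1 : Matrix (Fin 1) (Fin 1) ℝ), ?_, ?_⟩
        · unfold IsOrth; simp
        · unfold dPS
          rw [Fin.sum_univ_two]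
          have h0 : (∑ j, X 0 j * (Y * (1 : Matrix (Fin 1) (Fin 1) ℝ)) 0 j) = -1 := by
            simp only [Matrix.mul_apply]; simp [hX, hYdef, Fin.sum_univ_one]
          have h1 : (∑ j, X 1 j * (Y * (1 : Matrix (Fin 1) (Fin 1) ℝ)) 1 j) = 1 := by
            simp only [Matrix.mul_apply]; simp [hX, hYdef, Fin.sum_univ_one]
          rw [h0, h1, Real.arccos_neg_one, Real.arccos_one]
          rw [show π ^ 2 + 0 ^ 2 = π ^ 2 by ring]
          exact (Real.sqrt_sq pi_pos.le).symm
      refine le_antisymm (csInf_le ⟨0, ?_⟩ hmem) (le_csInf ⟨π, hmem⟩ ?_)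
      · rintro d ⟨O, -, rfl⟩; exact Real.sqrt_nonneg _
      · rintro d ⟨O, hO, rfl⟩
        have ho : O 0 0 * O 0 0 = 1 := by
          have := congrFun (congrFun hO 0) 0
          simpa [Matrix.mul_apply, Fin.sum_univ_one, Matrix.one_apply] using this
        have h0 : (∑ j, X 0 j * (Y * O) 0 j) = -(O 0 0) := by
          simp only [Matrix.mul_apply]; simp [hX, hYdef, Matrix.mul_apply, Fin.sum_univ_one]
        have h1 : (∑ j, X 1 j * (Y * O) 1 j) = O 0 0 := by
          simp only [Matrix.mul_apply]; simp [hX, hYdef, Matrix.mul_apply, Fin.sum_univ_one]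
        unfold dPS
        rw [Fin.sum_univ_two, h0, h1]
        rcases mul_self_eq_one_iff.mp ho with h | h <;>
          rw [h] <;>
          simp [Real.arccos_one, Real.arccos_neg_one] <;>
          exact (Real.sqrt_sq pi_pos.le).ge
    rw [hYeq]
    refine lt_of_le_of_lt hle ?_
    have : Real.sqrt (π ^ 2 / 2) < Real.sqrt (π ^ 2) := by
      apply Real.sqrt_lt_sqrt (by positivity)
      nlinarith [pi_pos]
    rwa [Real.sqrt_sq pi_pos.le] at this
end

section
/- For X ∈ ℝ^{m×k} of rank k with ℓ2-normalized rows and any W in the tangent space T_X = {V : diag(VXᵀ)=0}, the vertical projection P^v_X(W) = X T_{XᵀX}^{-1}(XᵀW - WᵀX) is well-defined (since XᵀX is positive definite and XᵀW - WᵀX is skew-symmetric) and satisfies: P^v_X(W) ∈ V_X = {XΩ : Ω skew}, and W - P^v_X(W) ∈ H_X = {V : VᵀX = XᵀV, diag(VXᵀ)=0}. -/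
open Matrix Real Filter

section Aux

variable {k : ℕ}

/-- The Sylvester operator `Ω ↦ EΩ + ΩE` as a linear map. -/
private def sylvMap (E : Matrix (Fin k) (Fin k) ℝ) :
    Matrix (Fin k) (Fin k) ℝ →ₗ[ℝ] Matrix (Fin k) (Fin k) ℝ where
  toFun Ω := E * Ω + Ω * E
  map_add' A B := by noncomm_ring
  map_smul' c A := by
    simp only [RingHom.id_apply, Matrix.mul_smul, Matrix.smul_mul, smul_add]

private lemma diag_transpose_mul_mul (E Ω : Matrix (Fin k) (Fin k) ℝ) (j : Fin k) :
    (Ωᵀ * E * Ω) j j = (fun i => Ω i j) ⬝ᵥ E *ᵥ (fun i => Ω i j) := by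
  simp only [Matrix.mul_assoc, Matrix.mul_apply, Matrix.transpose_apply, dotProduct,
    Matrix.mulVec, Finset.sum_mul,
    Finset.mul_sum]
  rw [Finset.sum_comm]
  exact Finset.sum_congr rfl fun a _ => Finset.sum_congr rfl fun b _ => by ring

private lemma diag_mul_mul_transpose {m : ℕ} (E : Matrix (Fin k) (Fin k) ℝ)
    (A : Matrix (Fin m) (Fin k) ℝ) (i : Fin m) :
    (A * E * Aᵀ) i i = (A i) ⬝ᵥ E *ᵥ (A i) := by
  simp only [Matrix.mul_assoc, Matrix.mul_apply, Matrix.transpose_apply, dotProduct,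
    Matrix.mulVec, Finset.sum_mul,
    Finset.mul_sum]
  rw [Finset.sum_comm]
  exact Finset.sum_congr rfl fun a _ => Finset.sum_congr rfl fun b _ => by ring

private lemma sylv_injective {E : Matrix (Fin k) (Fin k) ℝ} (hE : E.PosDef) :
    Function.Injective (sylvMap E) := by
  rw [← LinearMap.ker_eq_bot, LinearMap.ker_eq_bot']
  intro Ω hΩ
  have h0 : E * Ω + Ω * E = 0 := hΩ
  by_contra hne
  obtain ⟨i0, j0, hij⟩ : ∃ i j, Ω i j ≠ 0 := by
    by_contra h
    push_neg at h
    exact hne (by ext i j; simp [h])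
  have htr : (Ωᵀ * E * Ω).trace + (Ω * E * Ωᵀ).trace = 0 := by
    have h1 : (Ω * E * Ωᵀ).trace = (Ωᵀ * (Ω * E)).trace := by
      rw [Matrix.trace_mul_comm]
    rw [h1, Matrix.mul_assoc, ← Matrix.trace_add, ← Matrix.mul_add, h0, Matrix.mul_zero,
      Matrix.trace_zero]
  have hs1 : 0 < (Ωᵀ * E * Ω).trace := by
    rw [Matrix.trace]
    apply Finset.sum_pos'
    · intro j _
      rw [Matrix.diag_apply, diag_transpose_mul_mul]
      simpa using hE.posSemidef.dotProduct_mulVec_nonneg (fun i => Ω i j)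
    · refine ⟨j0, Finset.mem_univ _, ?_⟩
      rw [Matrix.diag_apply, diag_transpose_mul_mul]
      have hcol : (fun i => Ω i j0) ≠ 0 := by
        intro h
        exact hij (by simpa using congrFun h i0)
      simpa using hE.dotProduct_mulVec_pos hcol
  have hs2 : 0 ≤ (Ω * E * Ωᵀ).trace := by
    rw [Matrix.trace]
    apply Finset.sum_nonneg
    intro i _
    rw [Matrix.diag_apply, diag_mul_mul_transpose]
    simpa using hE.posSemidef.dotProduct_mulVec_nonneg (Ω i)
  linarith

private lemma sylv_surjective {E : Matrix (Fin k) (Fin k) ℝ} (hE : E.PosDef) :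
    Function.Surjective (sylvMap E) :=
  (LinearMap.injective_iff_surjective).mp (sylv_injective hE)

private lemma posDef_XtX {m : ℕ} (X : Matrix (Fin m) (Fin k) ℝ) (hrank : X.rank = k) :
    (Xᵀ * X).PosDef := by
  have hker : ∀ v : Fin k → ℝ, X *ᵥ v = 0 → v = 0 := by
    have hrn := X.mulVecLin.finrank_range_add_finrank_ker
    rw [show Matrix.rank X = Module.finrank ℝ (LinearMap.range X.mulVecLin) from rfl] at hrank
    rw [hrank, Module.finrank_fin_fun] at hrn
    have hfr : Module.finrank ℝ (LinearMap.ker X.mulVecLin) = 0 := by omega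
    have hbot : LinearMap.ker X.mulVecLin = ⊥ := Submodule.finrank_eq_zero.mp hfr
    intro v hv
    have hv' : v ∈ LinearMap.ker X.mulVecLin := by
      simpa [LinearMap.mem_ker, Matrix.mulVecLin_apply] using hv
    simpa [hbot] using hv'
  apply Matrix.PosDef.of_dotProduct_mulVec_pos
  · exact Matrix.isHermitian_conjTranspose_mul_self X
  · intro x hx
    have h1 : star x ⬝ᵥ (Xᵀ * X) *ᵥ x = (X *ᵥ x) ⬝ᵥ (X *ᵥ x) := by
      rw [show (star x : Fin k → ℝ) = x from rfl, ← Matrix.mulVec_mulVec,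
        Matrix.dotProduct_mulVec, Matrix.vecMul_transpose]
    rw [h1]
    have hXx : X *ᵥ x ≠ 0 := fun h => hx (hker x h)
    have hnn : 0 ≤ (X *ᵥ x) ⬝ᵥ (X *ᵥ x) :=
      Finset.sum_nonneg fun i _ => mul_self_nonneg _
    rcases hnn.lt_or_eq with h | h
    · exact h
    · exact absurd ((dotProduct_self_eq_zero).mp h.symm) hXx

end Aux

/-- The vertical projection P^v_X(W) = X Ω, where Ω uniquely solves the
Sylvester equation (XᵀX)Ω + Ω(XᵀX) = XᵀW - WᵀX, is well-defined and
W - X Ω is horizontal. -/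
theorem vertical_projection {m k : ℕ} (X : Matrix (Fin m) (Fin k) ℝ)
    (hX : RowsNormalized X) (hrank : X.rank = k)
    (W : Matrix (Fin m) (Fin k) ℝ) (hW : ∀ i, (W * Xᵀ) i i = 0) :
    ∃! Ω : Matrix (Fin k) (Fin k) ℝ,
      Ωᵀ = -Ω ∧ (Xᵀ * X) * Ω + Ω * (Xᵀ * X) = Xᵀ * W - Wᵀ * X ∧
      (W - X * Ω)ᵀ * X = Xᵀ * (W - X * Ω) ∧
      (∀ i, ((W - X * Ω) * Xᵀ) i i = 0) := by
  have hE : (Xᵀ * X).PosDef := posDef_XtX X hrank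
  obtain ⟨Ω, hΩ⟩ := sylv_surjective hE (Xᵀ * W - Wᵀ * X)
  have hΩ' : (Xᵀ * X) * Ω + Ω * (Xᵀ * X) = Xᵀ * W - Wᵀ * X := hΩ
  -- skew-symmetry
  have key : (Xᵀ * X) * Ωᵀ + Ωᵀ * (Xᵀ * X) = Wᵀ * X - Xᵀ * W := by
    have h := congrArg Matrix.transpose hΩ'
    simp only [Matrix.transpose_add, Matrix.transpose_sub, Matrix.transpose_mul,
      Matrix.transpose_transpose] at h
    rw [← h]
    abel
  have hskew : Ωᵀ = -Ω := by
    have h2 : sylvMap (Xᵀ * X) (Ωᵀ + Ω) = 0 := by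
      show (Xᵀ * X) * (Ωᵀ + Ω) + (Ωᵀ + Ω) * (Xᵀ * X) = 0
      calc (Xᵀ * X) * (Ωᵀ + Ω) + (Ωᵀ + Ω) * (Xᵀ * X)
          = ((Xᵀ * X) * Ωᵀ + Ωᵀ * (Xᵀ * X)) + ((Xᵀ * X) * Ω + Ω * (Xᵀ * X)) := by
            rw [Matrix.mul_add, Matrix.add_mul]; abel
        _ = (Wᵀ * X - Xᵀ * W) + (Xᵀ * W - Wᵀ * X) := by rw [key, hΩ']
        _ = 0 := by abel
    have h3 : Ωᵀ + Ω = 0 :=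
      sylv_injective hE (a₁ := Ωᵀ + Ω) (a₂ := 0) (by rw [h2, map_zero])
    exact eq_neg_of_add_eq_zero_left h3
  -- horizontality (symmetry condition)
  have h4 : (Xᵀ * X) * Ω + Ω * (Xᵀ * X) + Wᵀ * X = Xᵀ * W := by rw [hΩ']; abel
  have hsym : (W - X * Ω)ᵀ * X = Xᵀ * (W - X * Ω) := by
    calc (W - X * Ω)ᵀ * X = Wᵀ * X - Ωᵀ * (Xᵀ * X) := by
          rw [Matrix.transpose_sub, Matrix.sub_mul, Matrix.transpose_mul, Matrix.mul_assoc]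
      _ = Wᵀ * X + Ω * (Xᵀ * X) := by rw [hskew, Matrix.neg_mul, sub_neg_eq_add]
      _ = Xᵀ * W - (Xᵀ * X) * Ω := by rw [← h4]; abel
      _ = Xᵀ * W - Xᵀ * (X * Ω) := by rw [Matrix.mul_assoc]
      _ = Xᵀ * (W - X * Ω) := by rw [Matrix.mul_sub]
  -- tangency (diagonal condition)
  have hdiag : ∀ i, ((W - X * Ω) * Xᵀ) i i = 0 := by
    intro i
    have hq : (X i) ⬝ᵥ Ω *ᵥ (X i) = 0 := by
      have h5 : (X i) ⬝ᵥ Ω *ᵥ (X i) = (Ωᵀ *ᵥ (X i)) ⬝ᵥ (X i) := by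
        rw [Matrix.dotProduct_mulVec, ← Matrix.mulVec_transpose]
      rw [hskew, Matrix.neg_mulVec, neg_dotProduct,
        dotProduct_comm (Ω *ᵥ X i) (X i)] at h5
      linarith
    have h6 : ((W - X * Ω) * Xᵀ) i i = (W * Xᵀ) i i - (X * Ω * Xᵀ) i i := by
      rw [Matrix.sub_mul]; rfl
    rw [h6, hW i, diag_mul_mul_transpose, hq, sub_zero]
  refine ⟨Ω, ⟨hskew, hΩ', hsym, hdiag⟩, ?_⟩
  intro Ω' hΩ''
  exact sylv_injective hE (a₁ := Ω') (a₂ := Ω) (by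
    show (Xᵀ * X) * Ω' + Ω' * (Xᵀ * X) = (Xᵀ * X) * Ω + Ω * (Xᵀ * X)
    rw [hΩ''.2.1, hΩ'])
end

section
/- Let Z = Y Yᵀ with Y ∈ ℝ^{m×ℓ} of rank ℓ and ℓ2-normalized rows. Then the tangent space of Corr(m,ℓ) at Z, namely {ΔZ + ZΔᵀ : Δ ∈ ℝ^{m×m}, diag(ΔZ) = 0}, equals {ξYᵀ + Yξᵀ : ξ ∈ ℝ^{m×ℓ}, diag(ξYᵀ) = 0}. -/
open Matrix Real Filter

/-!
Since `Δ (Y Yᵀ) = (Δ Y) Yᵀ`, both sets are the image of `ξ ↦ ξ Yᵀ + Y ξᵀ` on `{ξ | diag (ξ Yᵀ) = 0}`,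
the first one with `ξ` restricted to matrices of the form `Δ Y`. Full column rank makes `Yᵀ Y`
invertible, so every `ξ` is of that form: `ξ = (ξ (Yᵀ Y)⁻¹ Yᵀ) Y`.
-/

namespace Matrix

variable {m n R : Type*} [Fintype m] [Fintype n] [DecidableEq n]

theorem isUnit_of_rank_eq_card [Field R] {A : Matrix n n R} (h : A.rank = Fintype.card n) :
    IsUnit A := by
  rw [← mulVec_surjective_iff_isUnit, ← coe_mulVecLin, ← LinearMap.range_eq_top]
  exact Submodule.eq_top_of_finrank_eq (h.trans (Module.finrank_fintype_fun_eq_card R).symm)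

theorem isUnit_transpose_mul_self_of_rank_eq_card [Field R] [LinearOrder R] [IsStrictOrderedRing R]
    {Y : Matrix m n R} (h : Y.rank = Fintype.card n) : IsUnit (Yᵀ * Y) :=
  isUnit_of_rank_eq_card ((rank_transpose_mul_self Y).trans h)

theorem mul_left_surjective_of_isUnit_transpose_mul_self [CommRing R] {Y : Matrix m n R}
    (h : IsUnit (Yᵀ * Y)) : Function.Surjective fun Δ : Matrix m m R ↦ Δ * Y := fun ξ ↦
  ⟨ξ * (Yᵀ * Y)⁻¹ * Yᵀ, by
    dsimp only
    rw [Matrix.mul_assoc, Matrix.mul_assoc, nonsing_inv_mul _ ((isUnit_iff_isUnit_det _).mp h),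
      Matrix.mul_one]⟩

end Matrix

theorem tangent_corr_characterization_general {m ℓ : ℕ} (Y : Matrix (Fin m) (Fin ℓ) ℝ)
    (hrank : Y.rank = ℓ) :
    {V : Matrix (Fin m) (Fin m) ℝ | ∃ Δ : Matrix (Fin m) (Fin m) ℝ,
        (∀ i, (Δ * (Y * Yᵀ)) i i = 0) ∧ V = Δ * (Y * Yᵀ) + (Y * Yᵀ) * Δᵀ} =
    {V : Matrix (Fin m) (Fin m) ℝ | ∃ ξ : Matrix (Fin m) (Fin ℓ) ℝ,
        (∀ i, (ξ * Yᵀ) i i = 0) ∧ V = ξ * Yᵀ + Y * ξᵀ} := by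
  have hsurj := mul_left_surjective_of_isUnit_transpose_mul_self
    (isUnit_transpose_mul_self_of_rank_eq_card (hrank.trans (Fintype.card_fin ℓ).symm))
  ext V
  constructor
  · rintro ⟨Δ, hdiag, rfl⟩
    exact ⟨Δ * Y, by simpa only [Matrix.mul_assoc] using hdiag, by
      simp only [transpose_mul, Matrix.mul_assoc]⟩
  · rintro ⟨ξ, hdiag, rfl⟩
    obtain ⟨Δ, rfl⟩ := hsurj ξ
    exact ⟨Δ, by simpa only [Matrix.mul_assoc] using hdiag, by
      simp only [transpose_mul, Matrix.mul_assoc]⟩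

/-- Characterization of the tangent space of Corr(m,ℓ) at Z = Y Yᵀ. -/
theorem tangent_corr_characterization {m ℓ : ℕ} (Y : Matrix (Fin m) (Fin ℓ) ℝ)
    (hY : RowsNormalized Y) (hrank : Y.rank = ℓ) :
    {V : Matrix (Fin m) (Fin m) ℝ | ∃ Δ : Matrix (Fin m) (Fin m) ℝ,
        (∀ i, (Δ * (Y * Yᵀ)) i i = 0) ∧ V = Δ * (Y * Yᵀ) + (Y * Yᵀ) * Δᵀ} =
    {V : Matrix (Fin m) (Fin m) ℝ | ∃ ξ : Matrix (Fin m) (Fin ℓ) ℝ,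
        (∀ i, (ξ * Yᵀ) i i = 0) ∧ V = ξ * Yᵀ + Y * ξᵀ} :=
  tangent_corr_characterization_general Y hrank
end
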